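/- Let $E = C([0,1], L^1[0,1])$ be the Banach space of continuous maps from $[0,1]$ to $L^1[0,1]$, with norm $\|G\|_{\infty,1} = \sup_{s\in[0,1]} \|G(s)\|_1$. Then $\|\cdot\|_{\infty,1}$ is directionally Hadamard differentiable at every $G \neq 0$: for every $H \in E$, every sequence $t_n \to 0$ with $t_n > 0$, and every sequence $H_n \to H$ in $E$, $\lim_{n\to\infty} \frac{\|G + t_n H_n\|_{\infty,1} - \|G\|_{\infty,1}}{t_n} = \sup_{s \in \mathcal{E}} \Big( \int_{\{x : G(s)(x) \neq 0\}} \operatorname{sgn}(G(s)(x))\, H(s)(x)\,dx + \int_{\{x : G(s)(x) = 0\}} |H(s)(x)|\,dx \Big)$, where $\mathcal{E} = \big\{ s \in [0,1] \,:\, \|G(s)\|_1 = \sup_{u\in[0,1]} \|G(u)\|_1 \big\}$. -/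

import Mathlib

open MeasureTheory Filter Topology

noncomputable section

namespace SupL1Aux

lemma div_sub_aux (A B C c : ℝ) (hc : c ≠ 0) : (A - C) / c - B = (A - c * B - C) / c := by
  field_simp
  ring

lemma add_div_aux (X w c : ℝ) (hc : c ≠ 0) : (X + c * w) / c = X / c + w := by
  field_simp

lemma norm_quot_mono {X : Type*} [NormedAddCommGroup X] [NormedSpace ℝ X]
    (a k : X) {s t : ℝ} (hs : 0 < s) (hst : s ≤ t) :
    (‖a + s • k‖ - ‖a‖) / s ≤ (‖a + t • k‖ - ‖a‖) / t := by
  have ht : 0 < t := hs.trans_le hst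
  set c := s / t with hc
  have hc0 : 0 ≤ c := by positivity
  have hc1 : c ≤ 1 := (div_le_one ht).2 hst
  have hct : c * t = s := div_mul_cancel₀ _ ht.ne'
  have key : a + s • k = (1 - c) • a + c • (a + t • k) := by
    rw [smul_add, smul_smul, hct, sub_smul, one_smul]
    abel
  have hle : ‖a + s • k‖ ≤ (1 - c) * ‖a‖ + c * ‖a + t • k‖ := by
    rw [key]
    refine (norm_add_le _ _).trans ?_
    rw [norm_smul, norm_smul, Real.norm_eq_abs, Real.norm_eq_abs,
      abs_of_nonneg hc0, abs_of_nonneg (by linarith)]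
  rw [div_le_div_iff₀ hs ht]
  have h2 : (‖a + s • k‖ - ‖a‖) ≤ c * (‖a + t • k‖ - ‖a‖) := by nlinarith
  calc (‖a + s • k‖ - ‖a‖) * t ≤ (c * (‖a + t • k‖ - ‖a‖)) * t :=
        mul_le_mul_of_nonneg_right h2 ht.le
    _ = (‖a + t • k‖ - ‖a‖) * s := by rw [mul_comm c, mul_assoc, hct]


lemma measurable_sign : Measurable Real.sign := by
  unfold Real.sign
  exact Measurable.ite measurableSet_Iio measurable_const
    (Measurable.ite measurableSet_Ioi measurable_const measurable_const)

lemma abs_sign_le (y : ℝ) : |Real.sign y| ≤ 1 := by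
  rcases Real.sign_apply_eq y with h | h | h <;> simp [h]

lemma abs_quot_le (a b : ℝ) {s : ℝ} (hs : 0 < s) : |(|a + s * b| - |a|) / s| ≤ |b| := by
  rw [abs_div, abs_of_pos hs, div_le_iff₀ hs]
  calc |(|a + s * b| - |a|)| ≤ |(a + s * b) - a| := abs_abs_sub_abs_le_abs_sub _ _
    _ = s * |b| := by rw [add_sub_cancel_left, abs_mul, abs_of_pos hs]
    _ = |b| * s := mul_comm _ _

lemma quot_eq_sign (a b : ℝ) {s : ℝ} (hs : 0 < s) (hsmall : s * |b| < |a|) :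
    (|a + s * b| - |a|) / s = Real.sign a * b := by
  rcases lt_trichotomy a 0 with ha | ha | ha
  · have h1 : a + s * b < 0 := by
      have h2 : s * b ≤ s * |b| := by nlinarith [le_abs_self b]
      have h3 : |a| = -a := abs_of_neg ha
      nlinarith
    rw [abs_of_neg h1, abs_of_neg ha, Real.sign_of_neg ha]
    field_simp
    ring
  · exfalso; rw [ha, abs_zero] at hsmall
    nlinarith [abs_nonneg b, mul_nonneg hs.le (abs_nonneg b)]
  · have h1 : 0 < a + s * b := by
      have h2 : -(s * b) ≤ s * |b| := by nlinarith [neg_abs_le b]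
      have h3 : |a| = a := abs_of_pos ha
      nlinarith
    rw [abs_of_pos h1, abs_of_pos ha, Real.sign_of_pos ha]
    field_simp
    ring

variable {μ : Measure ℝ}

/-- The one-sided directional derivative of the `L¹` norm. -/
def dfun (f k : Lp ℝ 1 μ) : ℝ :=
  (∫ x in {x : ℝ | f x ≠ 0}, Real.sign (f x) * k x ∂μ)
  + ∫ x in {x : ℝ | f x = 0}, |k x| ∂μ

lemma meas_S (f : Lp ℝ 1 μ) : MeasurableSet {x : ℝ | f x = 0} :=
  (Lp.stronglyMeasurable f).measurable (measurableSet_singleton 0)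

lemma sign_mul_le (f k : Lp ℝ 1 μ) (x : ℝ) : ‖Real.sign (f x) * k x‖ ≤ ‖|k x|‖ := by
  rw [Real.norm_eq_abs, Real.norm_eq_abs, abs_abs, abs_mul]
  nlinarith [abs_sign_le (f x), abs_nonneg (k x), abs_nonneg (Real.sign (f x))]

lemma sign_mul_integrable (f k : Lp ℝ 1 μ) :
    Integrable (fun x => Real.sign (f x) * k x) μ := by
  have hkm := (Lp.stronglyMeasurable k).measurable
  have hfm := (Lp.stronglyMeasurable f).measurable
  refine ((L1.integrable_coeFn k).abs.mono
    ((measurable_sign.comp hfm).mul hkm).aestronglyMeasurable ?_)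
  filter_upwards with x using sign_mul_le f k x

/-- `dfun` as a plain integral of a pointwise function. -/
lemma integrable_D (f k : Lp ℝ 1 μ) :
    Integrable (fun x => if f x = 0 then |k x| else Real.sign (f x) * k x) μ := by
  refine Integrable.mono (L1.integrable_coeFn k).abs ?_ ?_
  · exact (Measurable.ite (meas_S f) (Lp.stronglyMeasurable k).measurable.abs
      ((measurable_sign.comp (Lp.stronglyMeasurable f).measurable).mul
        (Lp.stronglyMeasurable k).measurable)).aestronglyMeasurable
  · filter_upwards with x
    by_cases hx : f x = 0
    · simp [hx]
    · simpa [hx] using sign_mul_le f k x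

/-- `dfun` as a plain integral of a pointwise function. -/
lemma dfun_eq_integral (f k : Lp ℝ 1 μ) :
    dfun f k = ∫ x, (if f x = 0 then |k x| else Real.sign (f x) * k x) ∂μ := by
  rw [← integral_add_compl (meas_S f) (integrable_D f k)]
  have h1 : (∫ x in {x : ℝ | f x = 0},
        (if f x = 0 then |k x| else Real.sign (f x) * k x) ∂μ)
      = ∫ x in {x : ℝ | f x = 0}, |k x| ∂μ := by
    refine setIntegral_congr_fun (meas_S f) fun x hx => ?_
    have hx' : f x = 0 := hx
    rw [if_pos hx']
  have h2 : (∫ x in {x : ℝ | f x = 0}ᶜ,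
        (if f x = 0 then |k x| else Real.sign (f x) * k x) ∂μ)
      = ∫ x in {x : ℝ | f x ≠ 0}, Real.sign (f x) * k x ∂μ := by
    refine setIntegral_congr_fun (meas_S f).compl fun x hx => ?_
    have hx' : ¬ f x = 0 := hx
    rw [if_neg hx']
  rw [h1, h2, dfun, add_comm]

lemma dfun_le_norm (f k : Lp ℝ 1 μ) : dfun f k ≤ ‖k‖ := by
  have hki := L1.integrable_coeFn k
  rw [dfun_eq_integral, L1.norm_eq_integral_norm]
  refine integral_mono (integrable_D f k) hki.norm fun x => ?_
  by_cases hx : f x = 0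
  · simp [hx, Real.norm_eq_abs]
  · simp only [if_neg hx, Real.norm_eq_abs]
    calc Real.sign (f x) * k x ≤ |Real.sign (f x) * k x| := le_abs_self _
      _ ≤ |k x| := by
        rw [abs_mul]
        nlinarith [abs_sign_le (f x), abs_nonneg (k x)]


lemma norm_add_smul (f k : Lp ℝ 1 μ) (c : ℝ) :
    ‖f + c • k‖ = ∫ x, |f x + c * k x| ∂μ := by
  rw [L1.norm_eq_integral_norm]
  refine integral_congr_ae ?_
  filter_upwards [Lp.coeFn_add f (c • k), Lp.coeFn_smul c k] with x h1 h2
  rw [h1, Pi.add_apply, h2, Pi.smul_apply, smul_eq_mul, Real.norm_eq_abs]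

/-- The key directional-derivative lemma for the `L¹` norm. -/
lemma tendsto_L1_quot (f k : Lp ℝ 1 μ) (t : ℕ → ℝ) (ht0 : ∀ n, 0 < t n)
    (htlim : Tendsto t atTop (𝓝 0)) :
    Tendsto (fun n => (‖f + t n • k‖ - ‖f‖) / t n) atTop (𝓝 (dfun f k)) := by
  have hfi : Integrable (f : ℝ → ℝ) μ := L1.integrable_coeFn f
  have hki : Integrable (k : ℝ → ℝ) μ := L1.integrable_coeFn k
  have hfm := (Lp.stronglyMeasurable f).measurable
  have hkm := (Lp.stronglyMeasurable k).measurable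
  have hnormf : ‖f‖ = ∫ x, |f x| ∂μ := by
    rw [L1.norm_eq_integral_norm]; simp [Real.norm_eq_abs]
  have hqi : ∀ n, Integrable (fun x => |f x + t n * k x|) μ :=
    fun n => (hfi.add (hki.const_mul (t n))).abs
  have hquot : ∀ n, (‖f + t n • k‖ - ‖f‖) / t n
      = ∫ x, (|f x + t n * k x| - |f x|) / t n ∂μ := by
    intro n
    rw [norm_add_smul f k (t n), hnormf, ← integral_sub (hqi n) hfi.abs, ← integral_div]
  have hrw : (fun n => (‖f + t n • k‖ - ‖f‖) / t n)
      = fun n => ∫ x, (|f x + t n * k x| - |f x|) / t n ∂μ := funext hquot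
  rw [hrw, dfun_eq_integral]
  refine tendsto_integral_of_dominated_convergence (fun x => |k x|) ?_ hki.abs ?_ ?_
  · intro n
    exact ((((hfm.add (hkm.const_mul (t n))).abs.sub hfm.abs).div_const
      (t n))).aestronglyMeasurable
  · intro n
    filter_upwards with x
    rw [Real.norm_eq_abs]
    exact abs_quot_le (f x) (k x) (ht0 n)
  · filter_upwards with x
    by_cases hx : f x = 0
    · rw [if_pos hx]
      refine Tendsto.congr (fun n => ?_) tendsto_const_nhds
      rw [hx, zero_add, abs_zero, sub_zero, abs_mul, abs_of_pos (ht0 n),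
        mul_div_cancel_left₀ _ (ht0 n).ne']
    · rw [if_neg hx]
      have hev : ∀ᶠ n in atTop, t n * (|k x| + 1) < |f x| := by
        have h1 : Tendsto (fun n => t n * (|k x| + 1)) atTop (𝓝 (0 * (|k x| + 1))) :=
          htlim.mul_const _
      -- 0 * _ = 0
        rw [zero_mul] at h1
        exact h1.eventually_lt_const (abs_pos.2 hx)
      refine Tendsto.congr' ?_ tendsto_const_nhds
      filter_upwards [hev] with n hn
      refine (quot_eq_sign (f x) (k x) (ht0 n) ?_).symm
      nlinarith [ht0 n]


end SupL1Aux

open SupL1Aux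

set_option maxHeartbeats 2000000 in
/-- Directional Hadamard differentiability of the norm `‖·‖_{∞,1}` on
`C([0,1], L¹[0,1])` at every `G ≠ 0`: for every direction `H`, every positive null
sequence `tₙ` and every `Hₙ → H`, the difference quotients converge to
`sup_{s ∈ 𝓔} ( ∫_{G(s)≠0} sgn(G(s)) H(s) + ∫_{G(s)=0} |H(s)| )`, where
`𝓔 = {s : ‖G(s)‖₁ = sup_u ‖G(u)‖₁}` is the argmax set. -/
theorem sup_L1_norm_hadamard_diff
    (G H : C(Set.Icc (0 : ℝ) 1, Lp ℝ 1 (volume.restrict (Set.Icc (0 : ℝ) 1))))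
    (hG : G ≠ 0)
    (t : ℕ → ℝ) (ht0 : ∀ n, 0 < t n) (htlim : Filter.Tendsto t Filter.atTop (nhds 0))
    (Hs : ℕ → C(Set.Icc (0 : ℝ) 1, Lp ℝ 1 (volume.restrict (Set.Icc (0 : ℝ) 1))))
    (hHlim : Filter.Tendsto Hs Filter.atTop (nhds H)) :
    Filter.Tendsto (fun n => (‖G + t n • Hs n‖ - ‖G‖) / t n) Filter.atTop
      (nhds (⨆ s : {s : Set.Icc (0 : ℝ) 1 | ‖G s‖ = ⨆ u : Set.Icc (0 : ℝ) 1, ‖G u‖},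
        (∫ x in {x : ℝ | G (s : Set.Icc (0 : ℝ) 1) x ≠ 0},
            Real.sign (G (s : Set.Icc (0 : ℝ) 1) x) * H (s : Set.Icc (0 : ℝ) 1) x
              ∂(volume.restrict (Set.Icc (0 : ℝ) 1)))
        + ∫ x in {x : ℝ | G (s : Set.Icc (0 : ℝ) 1) x = 0},
            |H (s : Set.Icc (0 : ℝ) 1) x|
              ∂(volume.restrict (Set.Icc (0 : ℝ) 1)))) := by
  classical
  show Filter.Tendsto (fun n => (‖G + t n • Hs n‖ - ‖G‖) / t n) Filter.atTop
    (nhds (⨆ s : {s : Set.Icc (0 : ℝ) 1 | ‖G s‖ = ⨆ u : Set.Icc (0 : ℝ) 1, ‖G u‖},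
      dfun (G (s : Set.Icc (0 : ℝ) 1)) (H (s : Set.Icc (0 : ℝ) 1))))
  have hGc : Continuous fun u : Set.Icc (0 : ℝ) 1 => ‖G u‖ := G.continuous.norm
  obtain ⟨s₀, -, hs₀'⟩ := isCompact_univ.exists_isMaxOn Set.univ_nonempty hGc.continuousOn
  have hs₀ : ∀ u : Set.Icc (0 : ℝ) 1, u ∈ Set.univ → ‖G u‖ ≤ ‖G s₀‖ :=
    fun u hu => (isMaxOn_iff.1 hs₀') u hu
  have hbddG : BddAbove (Set.range fun u : Set.Icc (0 : ℝ) 1 => ‖G u‖) := by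
    refine ⟨‖G s₀‖, ?_⟩
    rintro _ ⟨u, rfl⟩
    exact hs₀ u (Set.mem_univ u)
  have hM : (⨆ u : Set.Icc (0 : ℝ) 1, ‖G u‖) = ‖G s₀‖ :=
    le_antisymm (ciSup_le fun u => hs₀ u (Set.mem_univ u)) (le_ciSup hbddG s₀)
  have hGnorm : ‖G‖ = ⨆ u : Set.Icc (0 : ℝ) 1, ‖G u‖ := ContinuousMap.norm_eq_iSup_norm G
  haveI hne : Nonempty {s : Set.Icc (0 : ℝ) 1 | ‖G s‖ = ⨆ u : Set.Icc (0 : ℝ) 1, ‖G u‖} :=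
    ⟨⟨s₀, hM.symm⟩⟩
  set L := ⨆ s : {s : Set.Icc (0 : ℝ) 1 | ‖G s‖ = ⨆ u : Set.Icc (0 : ℝ) 1, ‖G u‖},
    dfun (G (s : Set.Icc (0 : ℝ) 1)) (H (s : Set.Icc (0 : ℝ) 1)) with hL
  have hbddL : BddAbove (Set.range
      fun s : {s : Set.Icc (0 : ℝ) 1 | ‖G s‖ = ⨆ u : Set.Icc (0 : ℝ) 1, ‖G u‖} =>
        dfun (G (s : Set.Icc (0 : ℝ) 1)) (H (s : Set.Icc (0 : ℝ) 1))) := by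
    refine ⟨‖H‖, ?_⟩
    rintro _ ⟨s, rfl⟩
    exact (dfun_le_norm _ _).trans (H.norm_coe_le_norm _)
  have hHn : Filter.Tendsto (fun n => ‖Hs n - H‖) Filter.atTop (nhds 0) :=
    tendsto_iff_norm_sub_tendsto_zero.1 hHlim
  rw [tendsto_order]
  constructor
  · -- lower bound
    intro a ha
    obtain ⟨s, hsa⟩ := exists_lt_of_lt_ciSup ha
    have hkey : Filter.Tendsto
        (fun n => (‖G ↑s + t n • H ↑s‖ - ‖G ↑s‖) / t n - ‖Hs n - H‖) Filter.atTop
        (nhds (dfun (G ↑s) (H ↑s) - 0)) :=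
      (tendsto_L1_quot _ _ t ht0 htlim).sub hHn
    rw [sub_zero] at hkey
    filter_upwards [hkey.eventually_const_lt hsa] with n hn
    refine hn.trans_le ?_
    have hGs : ‖G ↑s‖ = ‖G‖ := by rw [hGnorm]; exact s.2
    have h1 : ‖G ↑s + t n • H ↑s‖ - t n * ‖Hs n - H‖ ≤ ‖G + t n • Hs n‖ := by
      have e2 : ‖(G + t n • Hs n) ↑s‖ ≤ ‖G + t n • Hs n‖ :=
        ContinuousMap.norm_coe_le_norm _ _
      have e1 : (G + t n • Hs n) ↑s = G ↑s + t n • Hs n ↑s := by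
        simp only [ContinuousMap.add_apply, ContinuousMap.smul_apply]
      rw [e1] at e2
      have e3 : ‖G ↑s + t n • H ↑s‖ - ‖G ↑s + t n • Hs n ↑s‖ ≤ t n * ‖Hs n - H‖ := by
        have h5 := norm_sub_norm_le (G ↑s + t n • H ↑s) (G ↑s + t n • Hs n ↑s)
        have e4 : (G ↑s + t n • H ↑s) - (G ↑s + t n • Hs n ↑s)
            = t n • (H ↑s - Hs n ↑s) := by
          rw [smul_sub]; abel
        rw [e4, norm_smul, Real.norm_eq_abs, abs_of_pos (ht0 n)] at h5
        refine h5.trans ?_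
        have e5 : H ↑s - Hs n ↑s = (H - Hs n) ↑s := by
          simp only [ContinuousMap.sub_apply]
        have e6 := ContinuousMap.norm_coe_le_norm (H - Hs n) ↑s
        have e7 : ‖H - Hs n‖ = ‖Hs n - H‖ := norm_sub_rev _ _
        rw [e5]
        nlinarith [ht0 n]
      linarith
    rw [← hGs]
    have h2 : (‖G ↑s + t n • H ↑s‖ - t n * ‖Hs n - H‖ - ‖G ↑s‖) / t n
        ≤ (‖G + t n • Hs n‖ - ‖G ↑s‖) / t n := by
      gcongr
      exact (ht0 n).le
    calc (‖G ↑s + t n • H ↑s‖ - ‖G ↑s‖) / t n - ‖Hs n - H‖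
        = (‖G ↑s + t n • H ↑s‖ - t n * ‖Hs n - H‖ - ‖G ↑s‖) / t n :=
          div_sub_aux _ _ _ _ (ht0 n).ne'
      _ ≤ (‖G + t n • Hs n‖ - ‖G ↑s‖) / t n := h2
  · -- upper bound
    intro a ha
    by_contra hcon
    rw [Filter.not_eventually] at hcon
    obtain ⟨φ, hφm, hφ⟩ := Filter.extraction_of_frequently_atTop
      (hcon.mono fun n h => not_lt.1 h)
    have hσex : ∀ j : ℕ, ∃ s : Set.Icc (0 : ℝ) 1, ∀ u : Set.Icc (0 : ℝ) 1,
        ‖(G + t (φ j) • Hs (φ j)) u‖ ≤ ‖(G + t (φ j) • Hs (φ j)) s‖ := by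
      intro j
      obtain ⟨s, -, hs⟩ := isCompact_univ.exists_isMaxOn Set.univ_nonempty
        (G + t (φ j) • Hs (φ j)).continuous.norm.continuousOn
      exact ⟨s, fun u => (isMaxOn_iff.1 hs) u (Set.mem_univ u)⟩
    choose σ hσ using hσex
    obtain ⟨sstar, -, ψ, hψm, hσconv⟩ :=
      isCompact_univ.tendsto_subseq (fun j => Set.mem_univ (σ j))
    have hmm : StrictMono fun n => φ (ψ n) := hφm.comp hψm
    have hmt : Filter.Tendsto (fun n => t (φ (ψ n))) Filter.atTop (nhds 0) :=
      htlim.comp hmm.tendsto_atTop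
    have hmH : Filter.Tendsto (fun n => ‖Hs (φ (ψ n)) - H‖) Filter.atTop (nhds 0) :=
      hHn.comp hmm.tendsto_atTop
    have hmHnorm : Filter.Tendsto (fun n => ‖Hs (φ (ψ n))‖) Filter.atTop (nhds ‖H‖) :=
      (hHlim.comp hmm.tendsto_atTop).norm
    -- the maximizers converge in norm to the max
    have hlow : ∀ j, (⨆ u : Set.Icc (0 : ℝ) 1, ‖G u‖) - 2 * (t (φ j) * ‖Hs (φ j)‖)
        ≤ ‖G (σ j)‖ := by
      intro j
      have h1 : ‖(G + t (φ j) • Hs (φ j)) (σ j)‖ - t (φ j) * ‖Hs (φ j) (σ j)‖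
          ≤ ‖G (σ j)‖ := by
        have e : G (σ j) = (G + t (φ j) • Hs (φ j)) (σ j) - t (φ j) • Hs (φ j) (σ j) := by
          simp only [ContinuousMap.add_apply, ContinuousMap.smul_apply]
          abel
        rw [e]
        have h5 := norm_sub_norm_le ((G + t (φ j) • Hs (φ j)) (σ j))
          (t (φ j) • Hs (φ j) (σ j))
        rw [norm_smul, Real.norm_eq_abs, abs_of_pos (ht0 (φ j))] at h5
        linarith
      have h2 : ‖G s₀‖ - t (φ j) * ‖Hs (φ j) s₀‖ ≤ ‖(G + t (φ j) • Hs (φ j)) s₀‖ := by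
        have e : (G + t (φ j) • Hs (φ j)) s₀ = G s₀ + t (φ j) • Hs (φ j) s₀ := by
          simp only [ContinuousMap.add_apply, ContinuousMap.smul_apply]
        have h5 := norm_le_norm_add_norm_sub (G s₀ + t (φ j) • Hs (φ j) s₀) (G s₀)
        rw [add_sub_cancel_left, norm_smul, Real.norm_eq_abs,
          abs_of_pos (ht0 (φ j))] at h5
        rw [e]
        linarith
      have h3 := hσ j s₀
      have h4 := ContinuousMap.norm_coe_le_norm (Hs (φ j)) (σ j)
      have h5 := ContinuousMap.norm_coe_le_norm (Hs (φ j)) s₀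
      rw [hM]
      nlinarith [ht0 (φ j)]
    have hup : ∀ j, ‖G (σ j)‖ ≤ ⨆ u : Set.Icc (0 : ℝ) 1, ‖G u‖ :=
      fun j => le_ciSup hbddG (σ j)
    have hAnorm : Filter.Tendsto (fun n => ‖G (σ (ψ n))‖) Filter.atTop
        (nhds (⨆ u : Set.Icc (0 : ℝ) 1, ‖G u‖)) := by
      refine tendsto_of_tendsto_of_tendsto_of_le_of_le ?_ tendsto_const_nhds
        (fun n => hlow (ψ n)) (fun n => hup (ψ n))
      have h6 : Filter.Tendsto
          (fun n => (⨆ u : Set.Icc (0 : ℝ) 1, ‖G u‖) - 2 * (t (φ (ψ n)) * ‖Hs (φ (ψ n))‖))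
          Filter.atTop
          (nhds ((⨆ u : Set.Icc (0 : ℝ) 1, ‖G u‖) - 2 * (0 * ‖H‖))) :=
        tendsto_const_nhds.sub ((hmt.mul hmHnorm).const_mul 2)
      rw [zero_mul, mul_zero, sub_zero] at h6
      exact h6
    have hGsstar : Filter.Tendsto (fun n => ‖G (σ (ψ n))‖) Filter.atTop
        (nhds ‖G sstar‖) :=
      ((continuous_norm.comp G.continuous).tendsto sstar).comp hσconv
    have hstar : ‖G sstar‖ = ⨆ u : Set.Icc (0 : ℝ) 1, ‖G u‖ :=
      tendsto_nhds_unique hGsstar hAnorm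
    have hdL : dfun (G sstar) (H sstar) ≤ L := le_ciSup hbddL ⟨sstar, hstar⟩
    have hε0 : 0 < (a - L) / 3 := by linarith
    -- choose τ with small difference quotient at sstar
    have hτseq : Filter.Tendsto
        (fun j : ℕ => (‖G sstar + (1 / (j + 1 : ℝ)) • H sstar‖ - ‖G sstar‖)
          / (1 / (j + 1 : ℝ))) Filter.atTop (nhds (dfun (G sstar) (H sstar))) :=
      tendsto_L1_quot _ _ _ (fun j => by positivity)
        tendsto_one_div_add_atTop_nhds_zero_nat
    obtain ⟨j₀, hj₀⟩ := (hτseq.eventually_lt_const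
      (lt_add_of_pos_right _ hε0)).exists
    have hτ0 : (0 : ℝ) < 1 / (j₀ + 1 : ℝ) := by positivity
    have hev1 : ∀ᶠ n in Filter.atTop, t (φ (ψ n)) ≤ 1 / (j₀ + 1 : ℝ) :=
      hmt.eventually_le_const hτ0
    have hrcont : Filter.Tendsto
        (fun n => (‖G (σ (ψ n)) + (1 / (j₀ + 1 : ℝ)) • H sstar‖ - ‖G (σ (ψ n))‖)
          / (1 / (j₀ + 1 : ℝ))) Filter.atTop
        (nhds ((‖G sstar + (1 / (j₀ + 1 : ℝ)) • H sstar‖ - ‖G sstar‖)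
          / (1 / (j₀ + 1 : ℝ)))) := by
      have hc : Continuous fun u : Set.Icc (0 : ℝ) 1 =>
          (‖G u + (1 / (j₀ + 1 : ℝ)) • H sstar‖ - ‖G u‖) / (1 / (j₀ + 1 : ℝ)) :=
        ((G.continuous.add continuous_const).norm.sub G.continuous.norm).div_const _
      exact (hc.tendsto sstar).comp hσconv
    have hev2 : ∀ᶠ n in Filter.atTop,
        (‖G (σ (ψ n)) + (1 / (j₀ + 1 : ℝ)) • H sstar‖ - ‖G (σ (ψ n))‖)
          / (1 / (j₀ + 1 : ℝ)) < dfun (G sstar) (H sstar) + (a - L) / 3 :=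
      hrcont.eventually_lt_const hj₀
    have hw : Filter.Tendsto (fun n => ‖Hs (φ (ψ n)) (σ (ψ n)) - H sstar‖)
        Filter.atTop (nhds 0) := by
      have hb : ∀ n, ‖Hs (φ (ψ n)) (σ (ψ n)) - H sstar‖
          ≤ ‖Hs (φ (ψ n)) - H‖ + ‖H (σ (ψ n)) - H sstar‖ := by
        intro n
        have e : Hs (φ (ψ n)) (σ (ψ n)) - H sstar
            = (Hs (φ (ψ n)) - H) (σ (ψ n)) + (H (σ (ψ n)) - H sstar) := by
          simp only [ContinuousMap.sub_apply]
          abel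
        rw [e]
        exact (norm_add_le _ _).trans
          (add_le_add_left (ContinuousMap.norm_coe_le_norm _ _) _)
      have hHc : Filter.Tendsto (fun n => ‖H (σ (ψ n)) - H sstar‖) Filter.atTop
          (nhds 0) :=
        tendsto_iff_norm_sub_tendsto_zero.1 ((H.continuous.tendsto sstar).comp hσconv)
      refine squeeze_zero (fun n => norm_nonneg _) hb ?_
      simpa using hmH.add hHc
    have hev3 : ∀ᶠ n in Filter.atTop,
        ‖Hs (φ (ψ n)) (σ (ψ n)) - H sstar‖ < (a - L) / 3 :=
      hw.eventually_lt_const hε0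
    obtain ⟨n, h1, h2, h3⟩ := (hev1.and (hev2.and hev3)).exists
    -- the contradiction at index n
    have hqv : (‖G + t (φ (ψ n)) • Hs (φ (ψ n))‖ - ‖G‖) / t (φ (ψ n))
        ≤ (‖G (σ (ψ n)) + t (φ (ψ n)) • H sstar‖ - ‖G (σ (ψ n))‖) / t (φ (ψ n))
          + ‖Hs (φ (ψ n)) (σ (ψ n)) - H sstar‖ := by
      have hF : ‖G + t (φ (ψ n)) • Hs (φ (ψ n))‖
          ≤ ‖(G + t (φ (ψ n)) • Hs (φ (ψ n))) (σ (ψ n))‖ := by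
        rw [ContinuousMap.norm_eq_iSup_norm]
        exact ciSup_le (hσ (ψ n))
      have e1 : (G + t (φ (ψ n)) • Hs (φ (ψ n))) (σ (ψ n))
          = G (σ (ψ n)) + t (φ (ψ n)) • Hs (φ (ψ n)) (σ (ψ n)) := by
        simp only [ContinuousMap.add_apply, ContinuousMap.smul_apply]
      rw [e1] at hF
      have h4 : ‖G (σ (ψ n)) + t (φ (ψ n)) • Hs (φ (ψ n)) (σ (ψ n))‖
          ≤ ‖G (σ (ψ n)) + t (φ (ψ n)) • H sstar‖
            + t (φ (ψ n)) * ‖Hs (φ (ψ n)) (σ (ψ n)) - H sstar‖ := by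
        have e2 : G (σ (ψ n)) + t (φ (ψ n)) • Hs (φ (ψ n)) (σ (ψ n))
            = (G (σ (ψ n)) + t (φ (ψ n)) • H sstar)
              + t (φ (ψ n)) • (Hs (φ (ψ n)) (σ (ψ n)) - H sstar) := by
          rw [smul_sub]; abel
        rw [e2]
        refine (norm_add_le _ _).trans ?_
        rw [norm_smul, Real.norm_eq_abs, abs_of_pos (ht0 _)]
      have h5 : ‖G (σ (ψ n))‖ ≤ ‖G‖ := G.norm_coe_le_norm _
      have h6 : ‖G + t (φ (ψ n)) • Hs (φ (ψ n))‖ - ‖G‖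
          ≤ (‖G (σ (ψ n)) + t (φ (ψ n)) • H sstar‖ - ‖G (σ (ψ n))‖)
            + t (φ (ψ n)) * ‖Hs (φ (ψ n)) (σ (ψ n)) - H sstar‖ := by linarith
      have h7 : (‖G + t (φ (ψ n)) • Hs (φ (ψ n))‖ - ‖G‖) / t (φ (ψ n))
          ≤ ((‖G (σ (ψ n)) + t (φ (ψ n)) • H sstar‖ - ‖G (σ (ψ n))‖)
            + t (φ (ψ n)) * ‖Hs (φ (ψ n)) (σ (ψ n)) - H sstar‖) / t (φ (ψ n)) := by
        gcongr
        exact (ht0 _).le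
      refine h7.trans (le_of_eq ?_)
      exact add_div_aux _ _ _ (ht0 _).ne' 
    have hvr : (‖G (σ (ψ n)) + t (φ (ψ n)) • H sstar‖ - ‖G (σ (ψ n))‖) / t (φ (ψ n))
        ≤ (‖G (σ (ψ n)) + (1 / (j₀ + 1 : ℝ)) • H sstar‖ - ‖G (σ (ψ n))‖)
          / (1 / (j₀ + 1 : ℝ)) :=
      norm_quot_mono _ _ (ht0 _) h1
    have haq := hφ (ψ n)
    linarith
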